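/- Suppose m ≥ 5 and that u₁u_m | u₂u_{m−1}, u_{m−1}² | u_{m−2}u_m, and u_{m−1}² | u₃u_m. Then u₁u_{m−1} divides u₂uⱼ for every j with 3 ≤ j ≤ m−2. -/

import Mathlib

open MvPolynomial

lemma mono_dvd_iff (K : Type*) [Field K] (a1 b1 a2 b2 : ℕ) :
    (X 0 ^ a1 * X 1 ^ b1 : MvPolynomial (Fin 2) K) ∣ X 0 ^ a2 * X 1 ^ b2 ↔ a1 ≤ a2 ∧ b1 ≤ b2 := by
  rw [X_pow_eq_monomial, X_pow_eq_monomial, X_pow_eq_monomial, X_pow_eq_monomial,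
    monomial_mul, monomial_mul, one_mul, monomial_dvd_monomial]
  simp [Finsupp.le_iff, Finsupp.single_apply]
  constructor
  · intro h
    have h0 := h.1
    have h1 := h.2
    refine ⟨?_, ?_⟩
    · by_cases e0 : a1 = 0
      · omega
      · exact h0 e0
    · by_cases e1 : b1 = 0
      · omega
      · exact h1 e1
  · intro ⟨h1, h2⟩
    exact ⟨fun _ => h1, fun _ => h2⟩

lemma a_anti (m : ℕ) (a : ℕ → ℕ) (ha : ∀ i, 1 ≤ i → i < m → a (i + 1) < a i) :
    ∀ i j, 1 ≤ i → i ≤ j → j ≤ m → a j ≤ a i := by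
  intro i j hi
  induction j with
  | zero => omega
  | succ k ih =>
    intro hij hjm
    rcases Nat.eq_or_lt_of_le hij with h | h
    · subst h; omega
    · have h1 : a (k + 1) < a k := ha k (by omega) (by omega)
      have h2 := ih (by omega) (by omega)
      omega

lemma b_mono (m : ℕ) (b : ℕ → ℕ) (hb : ∀ i, 1 ≤ i → i < m → b i < b (i + 1)) :
    ∀ i j, 1 ≤ i → i ≤ j → j ≤ m → b i ≤ b j := by
  intro i j hi
  induction j with
  | zero => omega
  | succ k ih =>
    intro hij hjm
    rcases Nat.eq_or_lt_of_le hij with h | h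
    · subst h; omega
    · have h1 : b k < b (k + 1) := hb k (by omega) (by omega)
      have h2 := ih (by omega) (by omega)
      omega

/-- Case 2 of the proof of the improved tiny-squares theorem: if `u₁u_m ∣ u₂u_{m−1}`,
`u_{m−1}² ∣ u_{m−2}u_m` and `u_{m−1}² ∣ u₃u_m`, then `u₁u_{m−1} ∣ u₂uⱼ` for all
`3 ≤ j ≤ m−2`. -/
theorem case_two (K : Type*) [Field K] (m : ℕ) (hm : 5 ≤ m)
    (a b : ℕ → ℕ)
    (ha : ∀ i, 1 ≤ i → i < m → a (i + 1) < a i)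
    (hb : ∀ i, 1 ≤ i → i < m → b i < b (i + 1))
    (u : ℕ → MvPolynomial (Fin 2) K)
    (hu : ∀ i, u i = X 0 ^ a i * X 1 ^ b i)
    (hA : u 1 * u m ∣ u 2 * u (m - 1))
    (hBs : u (m - 1) ^ 2 ∣ u (m - 2) * u m)
    (hCs : u (m - 1) ^ 2 ∣ u 3 * u m) :
    ∀ j, 3 ≤ j → j ≤ m - 2 → u 1 * u (m - 1) ∣ u 2 * u j := by
  intro j hj3 hjm
  simp only [hu, mul_mul_mul_comm, ← pow_add, sq] at *
  rw [mono_dvd_iff] at *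
  have haj : a (m - 2) ≤ a j := a_anti m a ha j (m - 2) (by omega) hjm (by omega)
  have hbj : b 3 ≤ b j := b_mono m b hb 3 j (by omega) hj3 (by omega)
  omega
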